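/- Fix core scores θ. If ε* ∈ ℝ is a local maximizer of the map ε ↦ Ω(θ, ε), then the expected aggregated log-distance under the model evaluated at ε* equals the aggregated log-distance of the input network: Σ_{u < v} ρ u v · log(K u v) = Σ_{u < v} A u v · log(K u v). -/

import Mathlib

open Real Finset

/-- Edge probability of the spatial core-periphery model:
`ρ u v = exp (θ u + θ v) / (exp (θ u + θ v) + (K u v) ^ ε)`. -/
noncomputable def edgeProb {n : ℕ} (K : Fin n → Fin n → ℝ) (θ : Fin n → ℝ) (ε : ℝ)
    (u v : Fin n) : ℝ :=
  exp (θ u + θ v) / (exp (θ u + θ v) + (K u v) ^ ε)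

/-- Log-likelihood `Ω(θ, ε) = Σ_{u < v} [A u v * log ρ u v + (1 - A u v) * log (1 - ρ u v)]`. -/
noncomputable def logLik {n : ℕ} (A K : Fin n → Fin n → ℝ) (θ : Fin n → ℝ) (ε : ℝ) : ℝ :=
  ∑ p ∈ univ.filter (fun p : Fin n × Fin n => p.1 < p.2),
    (A p.1 p.2 * log (edgeProb K θ ε p.1 p.2) +
      (1 - A p.1 p.2) * log (1 - edgeProb K θ ε p.1 p.2))

lemma term_hasDerivAt (s k a ε : ℝ) (hk : 0 < k) :
    HasDerivAt (fun e : ℝ =>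
        a * log (exp s / (exp s + k ^ e)) + (1 - a) * log (1 - exp s / (exp s + k ^ e)))
      ((exp s / (exp s + k ^ ε) - a) * log k) ε := by
  have hD : ∀ e : ℝ, 0 < exp s + k ^ e := fun e =>
    add_pos (exp_pos s) (rpow_pos_of_pos hk e)
  have heq : (fun e : ℝ =>
      a * log (exp s / (exp s + k ^ e)) + (1 - a) * log (1 - exp s / (exp s + k ^ e)))
      = fun e : ℝ => a * s + ((1 - a) * log k) * e - log (exp s + k ^ e) := by
    funext e
    have hDe := hD e
    have h1 : 1 - exp s / (exp s + k ^ e) = k ^ e / (exp s + k ^ e) := by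
      field_simp
      ring
    rw [h1, log_div (exp_pos s).ne' hDe.ne', log_div (rpow_pos_of_pos hk e).ne' hDe.ne',
      log_exp, log_rpow hk]
    ring
  rw [heq]
  have h1 : HasDerivAt (fun e : ℝ => a * s + ((1 - a) * log k) * e) ((1 - a) * log k) ε := by
    simpa using ((hasDerivAt_id ε).const_mul ((1 - a) * log k)).const_add (a * s)
  have h2 : HasDerivAt (fun e : ℝ => exp s + k ^ e) (k ^ ε * log k) ε := by
    simpa using ((Real.hasStrictDerivAt_const_rpow hk ε).hasDerivAt).const_add (exp s)
  have h3 : HasDerivAt (fun e : ℝ => log (exp s + k ^ e))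
      ((k ^ ε * log k) / (exp s + k ^ ε)) ε := h2.log (hD ε).ne'
  have := h1.fun_sub h3
  refine this.congr_deriv ?_
  field_simp
  ring

/-- Fix core scores `θ`. If `ε*` is a local maximizer of `ε ↦ Ω(θ, ε)`, then the expected
aggregated log-distance under the model evaluated at `ε*` equals the aggregated
log-distance of the input network:
`Σ_{u < v} ρ u v * log (K u v) = Σ_{u < v} A u v * log (K u v)`. -/
theorem expected_aggregated_log_distance_eq_of_isLocalMax
    (n : ℕ) (A K : Fin n → Fin n → ℝ)
    (hA : ∀ u v, A u v = 0 ∨ A u v = 1) (hAsymm : ∀ u v, A u v = A v u)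
    (hAdiag : ∀ u, A u u = 0)
    (hKsymm : ∀ u v, K u v = K v u) (hKpos : ∀ u v : Fin n, u ≠ v → 0 < K u v)
    (θ : Fin n → ℝ) (ε : ℝ)
    (hmax : IsLocalMax (fun e : ℝ => logLik A K θ e) ε) :
    ∑ p ∈ univ.filter (fun p : Fin n × Fin n => p.1 < p.2),
        edgeProb K θ ε p.1 p.2 * log (K p.1 p.2) =
      ∑ p ∈ univ.filter (fun p : Fin n × Fin n => p.1 < p.2),
        A p.1 p.2 * log (K p.1 p.2) := by
  have hderiv : HasDerivAt (fun e : ℝ => logLik A K θ e)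
      (∑ p ∈ univ.filter (fun p : Fin n × Fin n => p.1 < p.2),
        (edgeProb K θ ε p.1 p.2 - A p.1 p.2) * log (K p.1 p.2)) ε := by
    unfold logLik edgeProb
    exact HasDerivAt.fun_sum fun p hp => by
      refine term_hasDerivAt _ _ _ _ (hKpos p.1 p.2 ?_)
      exact ne_of_lt (mem_filter.mp hp).2
  have h0 := hmax.hasDerivAt_eq_zero hderiv
  have := sub_eq_zero.mpr (rfl :
    (∑ p ∈ univ.filter (fun p : Fin n × Fin n => p.1 < p.2),
        edgeProb K θ ε p.1 p.2 * log (K p.1 p.2)) = _)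
  rw [← sub_eq_zero, ← Finset.sum_sub_distrib]
  simpa [sub_mul] using h0
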